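/- For every w ∈ 𝔽 with |w| > 1, the linear operator Â_w in c defined by (Â_w x)_k = w^k·(x_{k+1} − l(x)) + x_1 − l(x) on the domain D(Â_w) = {x ∈ c : (w^k(x_{k+1} − l(x)))_{k≥1} ∈ c₀} is unbounded, closed, and chaotic (it has a hypercyclic vector in ⋂_{n≥1} D(Â_wⁿ) and a dense set of periodic points); moreover, every λ ∈ 𝔽 is an eigenvalue of Â_w of geometric multiplicity 1, i.e., dim ker(Â_w − λI) = 1. -/

import Mathlib

open Filter Topology

/-- The set of convergent sequences (the space `c`, as raw sequences; the Lean index `k`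
corresponds to the paper's index `k + 1`, so the paper's first entry `x_1` is `x 0`). -/
def cSet (𝕜 : Type*) [RCLike 𝕜] : Set (ℕ → 𝕜) :=
  {x | ∃ L : 𝕜, Tendsto x atTop (nhds L)}

/-- The action of the operator `Â_w` in `c`:
`(Â_w x)_k = w^k (x_{k+1} - l(x)) + x_1 - l(x)` for the paper's `1`-based `k ≥ 1`, i.e.
`(Â_w x) k = w^(k+1) * (x (k+1) - l(x)) + (x 0 - l(x))` in `0`-based indexing, where `l`
is the limit functional. -/
def hatAct {𝕜 : Type*} [RCLike 𝕜] (w : 𝕜) (l : (ℕ → 𝕜) → 𝕜) (x : ℕ → 𝕜) : ℕ → 𝕜 :=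
  fun k => w ^ (k + 1) * (x (k + 1) - l x) + (x 0 - l x)

/-- The domain `D(Â_w) = {x ∈ c : (w^k (x_{k+1} - l(x)))_k ∈ c₀}`. -/
def hatDom {𝕜 : Type*} [RCLike 𝕜] (w : 𝕜) (l : (ℕ → 𝕜) → 𝕜) : Set (ℕ → 𝕜) :=
  {x | x ∈ cSet 𝕜 ∧
    Tendsto (fun k : ℕ => w ^ (k + 1) * (x (k + 1) - l x)) atTop (nhds (0 : 𝕜))}

/-- The recursively defined domain of the `n`-th power:
`D(Â_wⁿ) = {x : Â_w^m x ∈ D(Â_w) for all m < n}`. -/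
def hatDomPow {𝕜 : Type*} [RCLike 𝕜] (w : 𝕜) (l : (ℕ → 𝕜) → 𝕜) (n : ℕ) : Set (ℕ → 𝕜) :=
  {x | ∀ m < n, (hatAct w l)^[m] x ∈ hatDom w l}

/-- The sup-norm `‖x‖_∞ = sup_k |x_k|` of a sequence. -/
noncomputable def supNorm {𝕜 : Type*} [RCLike 𝕜] (f : ℕ → 𝕜) : ℝ :=
  ⨆ k, ‖f k‖

open TopologicalSpace

/-! ### triangle numbers and nat lemmas -/

def tri : ℕ → ℕ
  | 0 => 0
  | n + 1 => tri n + (n + 1)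

lemma tri_succ (n : ℕ) : tri (n + 1) = tri n + (n + 1) := rfl

lemma tri_le_sq (n : ℕ) : tri n ≤ n * n := by
  induction n with
  | zero => simp [tri]
  | succ n ih => rw [tri_succ]; nlinarith

lemma tri_one : tri 1 = 1 := rfl

lemma tri_ge_self (n : ℕ) : n ≤ tri n := by
  induction n with
  | zero => simp [tri]
  | succ n ih => rw [tri_succ]; omega

lemma lb_of_incr (f : ℕ → ℕ) (hf : ∀ q, f q + q ≤ f (q + 1)) (B : ℕ) :
    ∀ q, (q - B) * B ≤ f q := by
  intro q
  induction q with
  | zero => simp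
  | succ q ih =>
    rcases le_or_gt (q + 1) B with h | h
    · simp [Nat.sub_eq_zero_of_le h]
    · have hBq : B ≤ q := by omega
      have : (q + 1 - B) * B = (q - B) * B + B := by
        rw [show q + 1 - B = (q - B) + 1 by omega]; ring
      have hq := hf q
      calc (q + 1 - B) * B = (q - B) * B + B := this
        _ ≤ f q + q := by have := ih; omega
        _ ≤ f (q + 1) := hf q

lemma ge_linear (f : ℕ → ℕ) (hf : ∀ q, f q + q ≤ f (q + 1)) (a b : ℕ) :
    ∃ q₀, ∀ q ≥ q₀, a * q + b ≤ f q := by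
  refine ⟨a * (a + 1) + (a + 1) + b, fun q hq => ?_⟩
  have h1 : (q - (a + 1)) * (a + 1) ≤ f q := lb_of_incr f hf (a + 1) q
  have h2 : a + 1 ≤ q := by nlinarith
  have h3 : (q - (a + 1)) * (a + 1) = q * (a + 1) - (a + 1) * (a + 1) := by
    rw [Nat.sub_mul]
  have : a * q + b ≤ (q - (a + 1)) * (a + 1) := by
    have hc : q * (a + 1) = a * q + q := by ring
    have hk : (a + 1) * (a + 1) = a * (a + 1) + (a + 1) := by ring
    omega
  omega

/-! ### supNorm and limit infrastructure -/

section Infra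
variable {𝕜 : Type*} [RCLike 𝕜]

lemma cSet_bdd {f : ℕ → 𝕜} (hf : f ∈ cSet 𝕜) :
    BddAbove (Set.range fun k => ‖f k‖) := by
  obtain ⟨L, hL⟩ := hf
  exact (hL.norm).bddAbove_range

lemma norm_le_supNorm {f : ℕ → 𝕜} (hf : f ∈ cSet 𝕜) (k : ℕ) : ‖f k‖ ≤ supNorm f :=
  le_ciSup (cSet_bdd hf) k

lemma supNorm_le {f : ℕ → 𝕜} {C : ℝ} (h : ∀ k, ‖f k‖ ≤ C) : supNorm f ≤ C :=
  ciSup_le h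

lemma cSet_sub {f g : ℕ → 𝕜} (hf : f ∈ cSet 𝕜) (hg : g ∈ cSet 𝕜) : f - g ∈ cSet 𝕜 := by
  obtain ⟨L, hL⟩ := hf; obtain ⟨M, hM⟩ := hg
  exact ⟨L - M, hL.sub hM⟩

variable {w : 𝕜} {l : (ℕ → 𝕜) → 𝕜}
variable (hw : 1 < ‖w‖) (hl : ∀ x ∈ cSet 𝕜, Filter.Tendsto x Filter.atTop (nhds (l x)))

include hl in
lemma l_eq {x : ℕ → 𝕜} {L : 𝕜} (hx : Filter.Tendsto x Filter.atTop (nhds L)) : l x = L :=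
  tendsto_nhds_unique (hl x ⟨L, hx⟩) hx

/-- `u` decays faster than any geometric sequence. -/
def Decays (w : 𝕜) (u : ℕ → 𝕜) : Prop :=
  ∀ a b : ℕ, ∀ᶠ k in Filter.atTop, ‖u k‖ * ‖w‖ ^ (a * k + b) ≤ 1

include hw in
lemma hs_of_decays {u : ℕ → 𝕜} (hu : Decays w u) (m c : ℕ) :
    Filter.Tendsto (fun k => w ^ (m * k + c) * u (k + m)) Filter.atTop (nhds 0) := by
  have hw0 : (0:ℝ) < ‖w‖ := lt_trans one_pos hw
  have hw1 : (1:ℝ) ≤ ‖w‖ := le_of_lt hw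
  rw [tendsto_zero_iff_norm_tendsto_zero]
  have hr0 : (0:ℝ) ≤ ‖w‖⁻¹ := by positivity
  have hr1 : ‖w‖⁻¹ < 1 := by
    rw [inv_lt_one_iff₀]; right; exact hw
  apply squeeze_zero' (Filter.Eventually.of_forall fun k => norm_nonneg _)
    (g := fun k => (‖w‖⁻¹) ^ k)
  · have he := hu (m + 1) c
    rw [Filter.eventually_atTop] at he ⊢
    obtain ⟨k₀, hk₀⟩ := he
    refine ⟨k₀, fun k hk => ?_⟩
    have h1 : ‖u (k + m)‖ * ‖w‖ ^ ((m + 1) * (k + m) + c) ≤ 1 := hk₀ (k + m) (le_trans hk (Nat.le_add_right _ _))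
    have hnm : ‖w ^ (m * k + c) * u (k + m)‖ = ‖w‖ ^ (m * k + c) * ‖u (k + m)‖ := by
      rw [norm_mul, norm_pow]
    rw [hnm]
    have hexp : m * k + c + k ≤ (m + 1) * (k + m) + c := by nlinarith
    have h2 : ‖w‖ ^ (m * k + c) * ‖w‖ ^ k ≤ ‖w‖ ^ ((m + 1) * (k + m) + c) := by
      rw [← pow_add]
      exact pow_le_pow_right₀ hw1 hexp
    -- from h1 : ‖u (k+m)‖ ≤ (‖w‖ ^ ((m+1)*(k+m)+c))⁻¹
    have hpos : (0:ℝ) < ‖w‖ ^ ((m + 1) * (k + m) + c) := by positivity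
    have h3 : ‖u (k + m)‖ ≤ (‖w‖ ^ ((m + 1) * (k + m) + c))⁻¹ := by
      rw [← one_div, le_div_iff₀ hpos]
      exact h1
    calc ‖w‖ ^ (m * k + c) * ‖u (k + m)‖
        ≤ ‖w‖ ^ (m * k + c) * (‖w‖ ^ ((m + 1) * (k + m) + c))⁻¹ := by
          apply mul_le_mul_of_nonneg_left h3 (by positivity)
      _ ≤ (‖w‖⁻¹) ^ k := by
          have hBk : (0:ℝ) < ‖w‖ ^ k := by positivity
          rw [inv_pow, mul_inv_le_iff₀ hpos, inv_mul_eq_div, le_div_iff₀ hBk]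
          linarith [h2]
  · exact tendsto_pow_atTop_nhds_zero_of_lt_one hr0 hr1

end Infra

section Iter
variable {𝕜 : Type*} [RCLike 𝕜] {w : 𝕜} {l : (ℕ → 𝕜) → 𝕜}
variable (hw : 1 < ‖w‖) (hl : ∀ x ∈ cSet 𝕜, Filter.Tendsto x Filter.atTop (nhds (l x)))

include hl in
/-- The master iterate lemma: if `x → L` and all the weighted shifts of `u = x - L` tend to `0`,
then all iterates of `hatAct` on `x` are given by an explicit formula and lie in the domain. -/
lemma iter_master {x : ℕ → 𝕜} {L : 𝕜} (hx : Filter.Tendsto x Filter.atTop (nhds L))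
    (HS : ∀ m, 1 ≤ m →
      Filter.Tendsto (fun k => w ^ (m * k + tri m) * (x (k + m) - L)) Filter.atTop (nhds 0)) :
    (∀ j : ℕ, (hatAct w l)^[j + 1] x =
      fun k => w ^ ((j + 1) * k + tri (j + 1)) * (x (k + (j + 1)) - L)
        + w ^ (tri j) * (x j - L)) ∧
    (∀ j : ℕ, (hatAct w l)^[j] x ∈ hatDom w l) := by
  have hxc : x ∈ cSet 𝕜 := ⟨L, hx⟩
  have hlx : l x = L := l_eq hl hx
  have step : ∀ (j k : ℕ),
      w ^ (k + 1) * (w ^ ((j + 1) * (k + 1) + tri (j + 1)) * (x (k + 1 + (j + 1)) - L))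
      = w ^ ((j + 1 + 1) * k + tri (j + 1 + 1)) * (x (k + (j + 1 + 1)) - L) := by
    intro j k
    rw [← mul_assoc, ← pow_add]
    have e1 : k + 1 + ((j + 1) * (k + 1) + tri (j + 1)) = (j + 1 + 1) * k + tri (j + 1 + 1) := by
      rw [tri_succ (j + 1)]; ring
    have e2 : k + 1 + (j + 1) = k + (j + 1 + 1) := by omega
    rw [e1, e2]
  -- the formula, by induction
  have form : ∀ j : ℕ, (hatAct w l)^[j + 1] x =
      fun k => w ^ ((j + 1) * k + tri (j + 1)) * (x (k + (j + 1)) - L)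
        + w ^ (tri j) * (x j - L) := by
    intro j
    induction j with
    | zero =>
      rw [Function.iterate_one]
      funext k
      show w ^ (k + 1) * (x (k + 1) - l x) + (x 0 - l x) = _
      rw [hlx]
      simp [tri]
    | succ j ih =>
      rw [Function.iterate_succ_apply', ih]
      set Cj : 𝕜 := w ^ (tri j) * (x j - L) with hCj
      have hyt : Filter.Tendsto
          (fun k => w ^ ((j + 1) * k + tri (j + 1)) * (x (k + (j + 1)) - L) + Cj)
          Filter.atTop (nhds (0 + Cj)) := (HS (j + 1) (by omega)).add tendsto_const_nhds
      rw [zero_add] at hyt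
      have hly : l (fun k => w ^ ((j + 1) * k + tri (j + 1)) * (x (k + (j + 1)) - L) + Cj)
          = Cj := l_eq hl hyt
      funext k
      show w ^ (k + 1) * (_ - _) + (_ - _) = _
      rw [hly]
      simp only [add_sub_cancel_right]
      rw [step j k]
      norm_num
  refine ⟨form, fun j => ?_⟩
  cases j with
  | zero =>
    refine ⟨hxc, ?_⟩
    simp only [Function.iterate_zero_apply, hlx]
    have := HS 1 le_rfl
    simp only [one_mul, tri_one] at this
    exact this
  | succ j =>
    rw [form j]
    set Cj : 𝕜 := w ^ (tri j) * (x j - L) with hCj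
    have hyt : Filter.Tendsto
        (fun k => w ^ ((j + 1) * k + tri (j + 1)) * (x (k + (j + 1)) - L) + Cj)
        Filter.atTop (nhds (0 + Cj)) := (HS (j + 1) (by omega)).add tendsto_const_nhds
    rw [zero_add] at hyt
    have hly : l (fun k => w ^ ((j + 1) * k + tri (j + 1)) * (x (k + (j + 1)) - L) + Cj)
        = Cj := l_eq hl hyt
    refine ⟨⟨Cj, hyt⟩, ?_⟩
    rw [hly]
    refine (HS (j + 1 + 1) (by omega)).congr fun k => ?_
    simp only [add_sub_cancel_right]
    exact (step j k).symm

end Iter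

section Parts
variable {𝕜 : Type*} [RCLike 𝕜] {w : 𝕜} {l : (ℕ → 𝕜) → 𝕜}
variable (hw : 1 < ‖w‖) (hl : ∀ x ∈ cSet 𝕜, Filter.Tendsto x Filter.atTop (nhds (l x)))

include hw hl in
lemma part1 : ¬ ∃ C : ℝ, ∀ x ∈ hatDom w l, supNorm (hatAct w l x) ≤ C * supNorm x := by
  rintro ⟨C, hC⟩
  obtain ⟨n, hn⟩ := pow_unbounded_of_one_lt C hw
  -- test vector: the indicator of n+1
  set x : ℕ → 𝕜 := fun j => if j = n + 1 then 1 else 0 with hxdef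
  have hx0 : Filter.Tendsto x Filter.atTop (nhds 0) := by
    apply Filter.Tendsto.congr' _ tendsto_const_nhds
    filter_upwards [Filter.eventually_ge_atTop (n + 2)] with j hj
    simp only [hxdef]
    rw [if_neg (by omega : ¬ j = n + 1)]
  have hlx : l x = 0 := l_eq hl hx0
  have hform : ∀ k, hatAct w l x k = if k = n then w ^ (n + 1) else 0 := by
    intro k
    simp only [hatAct, hlx]
    simp only [hxdef, sub_zero]
    rw [if_neg (by omega : ¬ (0:ℕ) = n + 1)]
    by_cases h : k = n
    · subst h; rw [if_pos rfl, if_pos rfl]; ring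
    · rw [if_neg (by omega : ¬ k + 1 = n + 1), if_neg h]; ring
  have hxdom : x ∈ hatDom w l := by
    refine ⟨⟨0, hx0⟩, ?_⟩
    apply Filter.Tendsto.congr' _ tendsto_const_nhds
    filter_upwards [Filter.eventually_ge_atTop (n + 1)] with j hj
    simp only [hlx]
    simp only [hxdef, sub_zero]
    rw [if_neg (by omega : ¬ j + 1 = n + 1)]
    ring
  have hsx : supNorm x ≤ 1 := by
    apply supNorm_le
    intro k
    by_cases h : k = n + 1 <;> simp [hxdef, h]
  have hAc : hatAct w l x ∈ cSet 𝕜 := by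
    refine ⟨0, ?_⟩
    apply Filter.Tendsto.congr' _ tendsto_const_nhds
    filter_upwards [Filter.eventually_ge_atTop (n + 1)] with j hj
    rw [hform j, if_neg (by omega : ¬ j = n)]
  have hnorm : ‖w‖ ^ (n + 1) ≤ supNorm (hatAct w l x) := by
    have := norm_le_supNorm hAc n
    rw [hform n, if_pos rfl, norm_pow] at this
    exact this
  have hCx := hC x hxdom
  have h1 : ‖w‖ ^ n ≤ ‖w‖ ^ (n + 1) :=
    pow_le_pow_right₀ (le_of_lt hw) (by omega)
  have hsx0 : 0 ≤ supNorm x := le_trans (norm_nonneg _) (norm_le_supNorm ⟨0, hx0⟩ 0)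
  have hpos : (0:ℝ) < ‖w‖ ^ (n + 1) := by positivity
  have h2 : ‖w‖ ^ (n + 1) ≤ C * supNorm x := le_trans hnorm hCx
  have hC0 : 0 < C := by nlinarith
  have h3 : C * supNorm x ≤ C := by nlinarith
  linarith

include hl in
lemma lim_dist {f g : ℕ → 𝕜} (hf : f ∈ cSet 𝕜) (hg : g ∈ cSet 𝕜) :
    ‖l f - l g‖ ≤ supNorm (f - g) := by
  have hff := hl f hf
  have hgg := hl g hg
  have ht : Filter.Tendsto (fun k => ‖(f - g) k‖) Filter.atTop (nhds ‖l f - l g‖) :=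
    (hff.sub hgg).norm
  exact le_of_tendsto ht (Filter.Eventually.of_forall fun k =>
    norm_le_supNorm (cSet_sub hf hg) k)

include hl in
lemma part2 : ∀ (X : ℕ → ℕ → 𝕜) (x y : ℕ → 𝕜),
    (∀ m, X m ∈ hatDom w l) → x ∈ cSet 𝕜 → y ∈ cSet 𝕜 →
    Filter.Tendsto (fun m => supNorm (X m - x)) Filter.atTop (nhds 0) →
    Filter.Tendsto (fun m => supNorm (hatAct w l (X m) - y)) Filter.atTop (nhds 0) →
    x ∈ hatDom w l ∧ hatAct w l x = y := by
  intro X x y hX hx hy h1 h2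
  have hXc : ∀ m, X m ∈ cSet 𝕜 := fun m => (hX m).1
  -- pointwise convergence X m k → x k
  have hpt : ∀ k, Filter.Tendsto (fun m => X m k) Filter.atTop (nhds (x k)) := by
    intro k
    rw [tendsto_iff_norm_sub_tendsto_zero]
    exact squeeze_zero (fun m => norm_nonneg _)
      (fun m => norm_le_supNorm (cSet_sub (hXc m) hx) k) h1
  -- convergence of the limit functionals
  have hlX : Filter.Tendsto (fun m => l (X m)) Filter.atTop (nhds (l x)) := by
    rw [tendsto_iff_norm_sub_tendsto_zero]
    exact squeeze_zero (fun m => norm_nonneg _)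
      (fun m => lim_dist hl (hXc m) hx) h1
  -- each hatAct (X m) is convergent (to X m 0 - l (X m))
  have hAt : ∀ m, Filter.Tendsto (hatAct w l (X m)) Filter.atTop
      (nhds (X m 0 - l (X m))) := by
    intro m
    have := (hX m).2.add (tendsto_const_nhds (x := X m 0 - l (X m)))
    rw [zero_add] at this
    exact this
  have hAc : ∀ m, hatAct w l (X m) ∈ cSet 𝕜 := fun m => ⟨_, hAt m⟩
  have hlA : ∀ m, l (hatAct w l (X m)) = X m 0 - l (X m) := fun m => l_eq hl (hAt m)
  -- pointwise limits of hatAct (X m) k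
  have hpt2 : ∀ k, Filter.Tendsto (fun m => hatAct w l (X m) k) Filter.atTop
      (nhds (hatAct w l x k)) := by
    intro k
    exact ((((hpt (k+1)).sub hlX).const_mul _).add ((hpt 0).sub hlX))
  have hpt3 : ∀ k, Filter.Tendsto (fun m => hatAct w l (X m) k) Filter.atTop (nhds (y k)) := by
    intro k
    rw [tendsto_iff_norm_sub_tendsto_zero]
    exact squeeze_zero (fun m => norm_nonneg _)
      (fun m => norm_le_supNorm (cSet_sub (hAc m) hy) k) h2
  have hxy : hatAct w l x = y := funext fun k => tendsto_nhds_unique (hpt2 k) (hpt3 k)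
  -- identify l y
  have t1 : Filter.Tendsto (fun m => X m 0 - l (X m)) Filter.atTop (nhds (x 0 - l x)) :=
    (hpt 0).sub hlX
  have t2 : Filter.Tendsto (fun m => l (hatAct w l (X m))) Filter.atTop (nhds (l y)) := by
    rw [tendsto_iff_norm_sub_tendsto_zero]
    exact squeeze_zero (fun m => norm_nonneg _)
      (fun m => lim_dist hl (hAc m) hy) h2
  have t2' : Filter.Tendsto (fun m => X m 0 - l (X m)) Filter.atTop (nhds (l y)) := by
    refine t2.congr fun m => hlA m
  have hkey : x 0 - l x = l y := tendsto_nhds_unique t1 t2'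
  refine ⟨⟨hx, ?_⟩, hxy⟩
  have hyt : Filter.Tendsto (fun k => y k - l y) Filter.atTop (nhds 0) := by
    have := (hl y hy).sub (tendsto_const_nhds (x := l y))
    rw [sub_self] at this
    exact this
  refine hyt.congr fun k => ?_
  have : y k = w ^ (k + 1) * (x (k + 1) - l x) + (x 0 - l x) := by
    rw [← hxy]; rfl
  rw [this, ← hkey]
  ring

include hw in
lemma decays_tri_pow {lam : 𝕜} : Decays w (fun k => lam ^ (k + 1) * (w ^ tri k)⁻¹) := by
  intro a b
  obtain ⟨m, hm⟩ := pow_unbounded_of_one_lt ‖lam‖ hw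
  have htri : ∀ q, tri q + q ≤ tri (q + 1) := fun q => by rw [tri_succ]; omega
  obtain ⟨k₀, hk₀⟩ := ge_linear tri htri (a + m) (b + m)
  rw [Filter.eventually_atTop]
  refine ⟨k₀, fun k hk => ?_⟩
  have hw0 : (0:ℝ) < ‖w‖ := lt_trans one_pos hw
  have hw1 : (1:ℝ) ≤ ‖w‖ := le_of_lt hw
  have h1 : ‖lam ^ (k + 1) * (w ^ tri k)⁻¹‖ = ‖lam‖ ^ (k + 1) * (‖w‖ ^ tri k)⁻¹ := by
    rw [norm_mul, norm_pow, norm_inv, norm_pow]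
  rw [h1]
  have h2 : ‖lam‖ ^ (k + 1) ≤ (‖w‖ ^ m) ^ (k + 1) :=
    pow_le_pow_left₀ (norm_nonneg _) (le_of_lt hm) _
  have h3 : (‖w‖ ^ m) ^ (k + 1) = ‖w‖ ^ (m * (k + 1)) := by rw [← pow_mul]
  have hexp : m * (k + 1) + (a * k + b) ≤ tri k := by
    have := hk₀ k hk
    nlinarith
  have h4 : ‖w‖ ^ (m * (k + 1)) * ‖w‖ ^ (a * k + b) ≤ ‖w‖ ^ tri k := by
    rw [← pow_add]
    exact pow_le_pow_right₀ hw1 hexp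
  have hTpos : (0:ℝ) < ‖w‖ ^ tri k := by positivity
  rw [mul_assoc,  mul_comm ((‖w‖ ^ tri k)⁻¹) _, ← mul_assoc, ← div_eq_mul_inv,
    div_le_one hTpos]
  calc ‖lam‖ ^ (k + 1) * ‖w‖ ^ (a * k + b)
      ≤ ‖w‖ ^ (m * (k + 1)) * ‖w‖ ^ (a * k + b) := by
        apply mul_le_mul_of_nonneg_right _ (by positivity)
        rw [← h3]; exact h2
    _ ≤ ‖w‖ ^ tri k := h4

include hw hl in
lemma part5 : ∀ lam : 𝕜, ∃ v : ℕ → 𝕜, v ∈ hatDom w l ∧ v ≠ 0 ∧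
    {x : ℕ → 𝕜 | x ∈ hatDom w l ∧ hatAct w l x = lam • x} =
      Set.range fun c : 𝕜 => c • v := by
  intro lam
  have hwne : w ≠ 0 := by
    intro h; rw [h, norm_zero] at hw; linarith
  have hwp : ∀ n : ℕ, (w : 𝕜) ^ n ≠ 0 := fun n => pow_ne_zero n hwne
  set u : ℕ → 𝕜 := fun k => lam ^ (k + 1) * (w ^ tri k)⁻¹ with hu
  set v : ℕ → 𝕜 := fun k => u k + 1 with hvdef
  have hD : Decays w u := decays_tri_pow hw
  have hu0 : Filter.Tendsto u Filter.atTop (nhds 0) := by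
    have := hs_of_decays hw hD 0 0
    simp only [Nat.zero_mul, Nat.add_zero, pow_zero, one_mul, zero_mul, zero_add] at this
    exact this
  have hv1 : Filter.Tendsto v Filter.atTop (nhds 1) := by
    have := hu0.add (tendsto_const_nhds (x := (1:𝕜)))
    rw [zero_add] at this
    exact this
  have hlv : l v = 1 := l_eq hl hv1
  have hvc : v ∈ cSet 𝕜 := ⟨1, hv1⟩
  have hcond : Filter.Tendsto (fun k => w ^ (k + 1) * (v (k + 1) - 1)) Filter.atTop (nhds 0) := by
    refine (hs_of_decays hw hD 1 1).congr fun k => ?_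
    simp only [one_mul, hvdef, add_sub_cancel_right]
  have hvdom : v ∈ hatDom w l := by
    refine ⟨hvc, ?_⟩
    rw [hlv]
    exact hcond
  have hvne : v ≠ 0 := by
    intro h
    rw [h] at hv1
    have h10 : (1 : 𝕜) = 0 :=
      tendsto_nhds_unique hv1 (tendsto_const_nhds (x := (0:𝕜)))
    exact one_ne_zero h10
  -- the eigen equation
  have heig : ∀ k, w ^ (k + 1) * (v (k + 1) - 1) + (v 0 - 1) = lam * v k := by
    intro k
    simp only [hvdef, hu, add_sub_cancel_right, tri_succ]
    have h0 : tri 0 = 0 := rfl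
    rw [h0, pow_zero, inv_one, mul_one, pow_add]
    field_simp
    ring
  refine ⟨v, hvdom, hvne, ?_⟩
  ext x
  simp only [Set.mem_setOf_eq, Set.mem_range]
  constructor
  · rintro ⟨⟨hxc, hxcond⟩, heq⟩
    obtain ⟨L, hL⟩ := hxc
    have hlx : l x = L := l_eq hl hL
    rw [hlx] at hxcond
    -- limit identification
    have hAt : Filter.Tendsto (hatAct w l x) Filter.atTop (nhds (x 0 - L)) := by
      have h2 := hxcond.add (tendsto_const_nhds (x := x 0 - L))
      rw [zero_add] at h2
      exact h2.congr fun k => by simp [hatAct, hlx]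
    have hAt2 : Filter.Tendsto (fun k => lam * x k) Filter.atTop (nhds (lam * L)) :=
      hL.const_mul lam
    have hAt3 : Filter.Tendsto (hatAct w l x) Filter.atTop (nhds (lam * L)) := by
      rw [heq]
      exact hAt2
    have hkey : x 0 - L = lam * L := tendsto_nhds_unique hAt hAt3
    -- recurrence
    have hrec : ∀ k, w ^ (k + 1) * (x (k + 1) - L) = lam * (x k - L) := by
      intro k
      have := congrFun heq k
      simp only [hatAct, hlx, Pi.smul_apply, smul_eq_mul] at this
      have h2 : w ^ (k + 1) * (x (k + 1) - L) + (x 0 - L) = lam * x k := this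
      rw [hkey] at h2
      linear_combination h2
    -- closed form
    have hform : ∀ k, x k - L = lam ^ (k + 1) * (w ^ tri k)⁻¹ * L := by
      intro k
      induction k with
      | zero =>
        have h0 : tri 0 = 0 := rfl
        rw [h0, pow_zero, inv_one, pow_one, mul_one]
        linear_combination hkey
      | succ k ih =>
        have h := hrec k
        rw [ih] at h
        have hne := hwp (k + 1)
        have hT := hwp (tri k)
        rw [tri_succ, pow_add]
        field_simp at h ⊢
        linear_combination h
    refine ⟨L, ?_⟩
    funext k
    have := hform k
    simp only [Pi.smul_apply, smul_eq_mul, hvdef, hu]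
    linear_combination -this
  · rintro ⟨c, rfl⟩
    have hcv : Filter.Tendsto (c • v) Filter.atTop (nhds c) := by
      have := hv1.const_smul c
      rw [smul_eq_mul, mul_one] at this
      exact this
    have hlcv : l (c • v) = c := l_eq hl hcv
    refine ⟨⟨⟨c, hcv⟩, ?_⟩, ?_⟩
    · rw [hlcv]
      have := hcond.const_smul c
      rw [smul_zero] at this
      refine this.congr fun k => ?_
      simp only [Pi.smul_apply, smul_eq_mul]
      ring
    · funext k
      simp only [hatAct, hlcv, Pi.smul_apply, smul_eq_mul]
      have h := heig k
      linear_combination c * h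

include hw in
lemma decays_of_bound {u : ℕ → 𝕜} {R : ℝ} (g : ℕ → ℕ)
    (hg : ∀ a b : ℕ, ∃ k₀, ∀ k ≥ k₀, a * k + b ≤ g k)
    (hu : ∀ k, ‖u k‖ * ‖w‖ ^ g k ≤ R) : Decays w u := by
  intro a b
  have hw1 : (1:ℝ) ≤ ‖w‖ := le_of_lt hw
  obtain ⟨J, hJ⟩ := pow_unbounded_of_one_lt R hw
  obtain ⟨k₀, hk₀⟩ := hg a (b + J)
  rw [Filter.eventually_atTop]
  refine ⟨k₀, fun k hk => ?_⟩
  have hPW : ‖w‖ ^ (a * k + b) * ‖w‖ ^ J ≤ ‖w‖ ^ g k := by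
    rw [← pow_add]
    exact pow_le_pow_right₀ hw1 (by have := hk₀ k hk; omega)
  have h1 : ‖u k‖ * (‖w‖ ^ (a * k + b) * ‖w‖ ^ J) ≤ ‖u k‖ * ‖w‖ ^ g k :=
    mul_le_mul_of_nonneg_left hPW (norm_nonneg _)
  have h2 : ‖u k‖ * ‖w‖ ^ (a * k + b) * ‖w‖ ^ J ≤ 1 * ‖w‖ ^ J := by
    rw [mul_assoc, one_mul]
    calc ‖u k‖ * (‖w‖ ^ (a * k + b) * ‖w‖ ^ J) ≤ ‖u k‖ * ‖w‖ ^ g k := h1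
      _ ≤ R := hu k
      _ ≤ ‖w‖ ^ J := le_of_lt hJ
  exact le_of_mul_le_mul_right h2 (by positivity)

end Parts

/-- `e q r = Σ_{j<q} (N(jN+r) + tri N)`, the accumulated exponent along a residue class. -/
def eFun (N r : ℕ) : ℕ → ℕ
  | 0 => 0
  | q + 1 => eFun N r q + (N * (q * N + r) + tri N)

lemma eFun_succ (N r q : ℕ) : eFun N r (q + 1) = eFun N r q + (N * (q * N + r) + tri N) := rfl

lemma eFun_mono_r (N q r : ℕ) : eFun N 0 q ≤ eFun N r q := by
  induction q with
  | zero => exact le_refl _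
  | succ q ih =>
    rw [eFun_succ, eFun_succ]
    have : N * (q * N + 0) ≤ N * (q * N + r) := Nat.mul_le_mul_left _ (by omega)
    omega

lemma eFun_incr (N r : ℕ) (hN : 1 ≤ N) (q : ℕ) : eFun N r q + q ≤ eFun N r (q + 1) := by
  rw [eFun_succ]
  have h1 : q ≤ N * (q * N + r) := by
    calc q = 1 * (q * 1 + 0) := by ring
      _ ≤ N * (q * N + r) := by
        apply Nat.mul_le_mul hN
        have : q * 1 ≤ q * N := Nat.mul_le_mul_left _ hN
        omega
  omega

lemma eFun_ge_triN (N r : ℕ) (q : ℕ) (hq : 1 ≤ q) : tri N ≤ eFun N r q := by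
  induction q with
  | zero => omega
  | succ q ih =>
    rw [eFun_succ]
    rcases Nat.eq_zero_or_pos q with h | h
    · subst h; simp [eFun]
    · have := ih h; omega

lemma eFun_lin (N : ℕ) (hN : 1 ≤ N) (a b : ℕ) :
    ∃ k₀, ∀ k ≥ k₀, a * k + b ≤ eFun N (k % N) (k / N) := by
  obtain ⟨q₀, hq₀⟩ := ge_linear (eFun N 0) (eFun_incr N 0 hN) (a * N) (b + a * N)
  refine ⟨N * q₀, fun k hk => ?_⟩
  have hq : q₀ ≤ k / N := (Nat.le_div_iff_mul_le hN).mpr (by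
    have : q₀ * N = N * q₀ := Nat.mul_comm _ _
    omega)
  have h1 : a * N * (k / N) + (b + a * N) ≤ eFun N 0 (k / N) := hq₀ _ hq
  have h2 : eFun N 0 (k / N) ≤ eFun N (k % N) (k / N) := eFun_mono_r N _ _
  have hdm : k / N * N + k % N = k := by
    have := Nat.div_add_mod k N
    have h := Nat.mul_comm N (k / N)
    omega
  have hrem : k % N < N := Nat.mod_lt _ hN
  have h3 : a * k ≤ a * N * (k / N) + a * N := by
    calc a * k = a * (k / N * N + k % N) := by rw [hdm]
      _ ≤ a * (k / N * N + N) := Nat.mul_le_mul_left _ (by omega)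
      _ = a * N * (k / N) + a * N := by ring
  omega

section Part4
variable {𝕜 : Type*} [RCLike 𝕜] {w : 𝕜} {l : (ℕ → 𝕜) → 𝕜}
variable (hw : 1 < ‖w‖) (hl : ∀ x ∈ cSet 𝕜, Filter.Tendsto x Filter.atTop (nhds (l x)))

include hw hl in
lemma part4 : ∀ y ∈ cSet 𝕜, ∀ ε > (0 : ℝ),
    ∃ x : ℕ → 𝕜,
      (∃ N : ℕ, 1 ≤ N ∧ x ∈ hatDomPow w l N ∧ (hatAct w l)^[N] x = x) ∧
      supNorm (x - y) < ε := by
  intro y hy ε hε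
  have hw0 : (0:ℝ) < ‖w‖ := lt_trans one_pos hw
  have hw1 : (1:ℝ) ≤ ‖w‖ := le_of_lt hw
  have hwne : w ≠ 0 := by intro h; rw [h, norm_zero] at hw; linarith
  obtain ⟨M, hM⟩ := hy
  -- choose K with the tail within ε/4
  obtain ⟨K, hK⟩ := (Metric.tendsto_atTop.mp hM (ε/4) (by positivity))
  have hKn : ∀ k ≥ K, ‖y k - M‖ ≤ ε / 4 := by
    intro k hk
    have := hK k hk
    rw [dist_eq_norm] at this
    linarith
  -- global bound for the base block
  set R : ℝ := 1 + ‖M‖ + ∑ r ∈ Finset.range K, ‖y r - M‖ with hR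
  have hRM : ‖M‖ ≤ R := by
    have : (0:ℝ) ≤ ∑ r ∈ Finset.range K, ‖y r - M‖ :=
      Finset.sum_nonneg fun i _ => norm_nonneg _
    rw [hR]; linarith
  have hR1 : (1:ℝ) ≤ R := by
    have : (0:ℝ) ≤ ∑ r ∈ Finset.range K, ‖y r - M‖ :=
      Finset.sum_nonneg fun i _ => norm_nonneg _
    have := norm_nonneg M
    rw [hR]; linarith
  have hRy : ∀ r < K, ‖y r - M‖ ≤ R := by
    intro r hr
    have : ‖y r - M‖ ≤ ∑ i ∈ Finset.range K, ‖y i - M‖ :=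
      Finset.single_le_sum (f := fun i => ‖y i - M‖) (fun i _ => norm_nonneg _)
        (Finset.mem_range.mpr hr)
    rw [hR]; have := norm_nonneg M; linarith
  -- choose J with R ≤ (ε/4) ‖w‖^J
  obtain ⟨J, hJ⟩ := pow_unbounded_of_one_lt (4 * R / ε) hw
  have hJR : ∀ T : ℕ, J ≤ T → R ≤ ε / 4 * ‖w‖ ^ T := by
    intro T hT
    have h1 : ‖w‖ ^ J ≤ ‖w‖ ^ T := pow_le_pow_right₀ hw1 hT
    have h2 : 4 * R / ε < ‖w‖ ^ T := lt_of_lt_of_le hJ h1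
    rw [div_lt_iff₀ (by positivity)] at h2
    nlinarith
  -- choose the period
  set N : ℕ := max (K + 2) (J + 1) with hN
  have hNK : K + 2 ≤ N := le_max_left _ _
  have hNJ : J + 1 ≤ N := le_max_right _ _
  have hN1 : 1 ≤ N := by omega
  -- base block
  set u₀ : ℕ → 𝕜 := fun r =>
    if r < K then y r - M else if r = N - 1 then (w ^ tri (N - 1))⁻¹ * M else 0 with hu₀
  have hu₀R : ∀ r, ‖u₀ r‖ ≤ R := by
    intro r
    simp only [hu₀]
    by_cases h1 : r < K
    · rw [if_pos h1]; exact hRy r h1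
    · rw [if_neg h1]
      by_cases h2 : r = N - 1
      · rw [if_pos h2, norm_mul, norm_inv, norm_pow]
        have h3 : (1:ℝ) ≤ ‖w‖ ^ tri (N - 1) := one_le_pow₀ hw1
        have h4 : (‖w‖ ^ tri (N - 1))⁻¹ ≤ 1 := by
          rw [inv_le_one_iff₀]; right; exact h3
        calc (‖w‖ ^ tri (N - 1))⁻¹ * ‖M‖ ≤ 1 * ‖M‖ :=
              mul_le_mul_of_nonneg_right h4 (norm_nonneg _)
          _ ≤ R := by rw [one_mul]; exact hRM
      · rw [if_neg h2, norm_zero]; linarith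
  -- the periodic sequence
  set u : ℕ → 𝕜 := fun k => (w ^ (eFun N (k % N) (k / N)))⁻¹ * u₀ (k % N) with hu
  set x : ℕ → 𝕜 := fun k => u k + M with hx
  have hub : ∀ k, ‖u k‖ * ‖w‖ ^ (eFun N (k % N) (k / N)) ≤ R := by
    intro k
    rw [hu]
    simp only [norm_mul, norm_inv, norm_pow]
    have hp : (0:ℝ) < ‖w‖ ^ (eFun N (k % N) (k / N)) := by positivity
    rw [mul_comm ((‖w‖ ^ _)⁻¹) _, mul_assoc, inv_mul_cancel₀ (ne_of_gt hp), mul_one]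
    exact hu₀R _
  have hD : Decays w u := decays_of_bound hw _ (eFun_lin N hN1) hub
  -- u on [0, N)
  have hu_small : ∀ k, k < N → u k = u₀ k := by
    intro k hk
    rw [hu]
    simp only [Nat.mod_eq_of_lt hk, Nat.div_eq_of_lt hk]
    show (w ^ eFun N k 0)⁻¹ * u₀ k = u₀ k
    rw [show eFun N k 0 = 0 from rfl, pow_zero, inv_one, one_mul]
  -- the periodicity identity
  have hPER : ∀ k, w ^ (N * k + tri N) * u (k + N) = u k := by
    intro k
    have hmod : (k + N) % N = k % N := Nat.add_mod_right k N
    have hdiv : (k + N) / N = k / N + 1 := by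
      rw [Nat.add_div_right _ (by omega)]
    rw [hu]
    simp only [hmod, hdiv, eFun_succ]
    have hdm : N * (k / N * N + k % N) = N * k := by
      congr 1
      have := Nat.div_add_mod k N
      have h := Nat.mul_comm N (k / N)
      omega
    rw [hdm, ← mul_assoc]
    congr 1
    field_simp
    ring
  -- tendsto facts
  have hu0 : Filter.Tendsto u Filter.atTop (nhds 0) := by
    have := hs_of_decays hw hD 0 0
    simp only [Nat.zero_mul, Nat.add_zero, pow_zero, one_mul, zero_mul, zero_add] at this
    exact this
  have hxM : Filter.Tendsto x Filter.atTop (nhds M) := by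
    have := hu0.add (tendsto_const_nhds (x := M))
    rw [zero_add] at this
    exact this
  have hHS : ∀ m, 1 ≤ m →
      Filter.Tendsto (fun k => w ^ (m * k + tri m) * (x (k + m) - M)) Filter.atTop (nhds 0) := by
    intro m _
    refine (hs_of_decays hw hD m (tri m)).congr fun k => ?_
    rw [hx]
    simp only [add_sub_cancel_right]
  obtain ⟨form, dom⟩ := iter_master hl hxM hHS
  refine ⟨x, ⟨N, hN1, fun m _ => dom m, ?_⟩, ?_⟩
  · -- periodicity
    set j := N - 1 with hjdef
    have hj : N = j + 1 := by omega
    rw [hj, form j]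
    funext k
    have h1 : x (k + (j + 1)) - M = u (k + (j + 1)) := by simp only [hx]; ring
    have h2 : x j - M = u j := by simp only [hx]; ring
    have hP := hPER k
    rw [hj] at hP
    rw [h1, h2, hP]
    have h3 : u j = (w ^ tri j)⁻¹ * M := by
      rw [hu_small j (by omega)]
      simp only [hu₀]
      rw [if_neg (by omega : ¬ j < K)]
      simp
    rw [h3, ← mul_assoc, mul_inv_cancel₀ (pow_ne_zero _ hwne), one_mul]
  · -- the approximation bound
    have hptw : ∀ k, ‖(x - y) k‖ ≤ ε / 2 := by
      intro k
      have hxk : (x - y) k = u k + (M - y k) := by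
        simp only [Pi.sub_apply, hx]; ring
      rw [hxk]
      rcases lt_or_ge k K with hk | hk
      · -- exact agreement
        rw [hu_small k (by omega)]
        simp only [hu₀]
        rw [if_pos hk]
        have hz : (y k - M) + (M - y k) = 0 := by ring
        rw [hz, norm_zero]
        positivity
      · have hyk : ‖M - y k‖ ≤ ε / 4 := by
          have := hKn k hk
          rw [← norm_neg]
          simp only [neg_sub]
          exact this
        have huk : ‖u k‖ ≤ ε / 4 := by
          rcases lt_or_ge k N with hkN | hkN
          · rw [hu_small k hkN]
            simp only [hu₀]
            rw [if_neg (by omega : ¬ k < K)]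
            by_cases h2 : k = N - 1
            · rw [if_pos h2, norm_mul, norm_inv, norm_pow]
              have hT : J ≤ tri (N - 1) := le_trans (by omega) (tri_ge_self (N - 1))
              have hp : (0:ℝ) < ‖w‖ ^ tri (N - 1) := by positivity
              have h9 : ‖M‖ ≤ ε / 4 * ‖w‖ ^ tri (N - 1) := le_trans hRM (hJR _ hT)
              have h10 := mul_le_mul_of_nonneg_left h9 (inv_nonneg.mpr (le_of_lt hp))
              have h11 : (‖w‖ ^ tri (N - 1))⁻¹ * (ε / 4 * ‖w‖ ^ tri (N - 1)) = ε / 4 := by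
                field_simp
              rw [h11] at h10
              exact h10
            · rw [if_neg h2, norm_zero]; positivity
          · -- k ≥ N
            have he : tri N ≤ eFun N (k % N) (k / N) := by
              apply eFun_ge_triN
              exact (Nat.one_le_div_iff (by omega)).mpr hkN
            have hT : J ≤ tri N := le_trans (by omega) (tri_ge_self N)
            have h5 := hub k
            have h6 : ε / 4 * ‖w‖ ^ (eFun N (k % N) (k / N)) ≥ R := by
              apply hJR
              omega
            have hp : (0:ℝ) < ‖w‖ ^ (eFun N (k % N) (k / N)) := by positivity
            nlinarith [norm_nonneg (u k)]
        calc ‖u k + (M - y k)‖ ≤ ‖u k‖ + ‖M - y k‖ := norm_add_le _ _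
          _ ≤ ε / 4 + ε / 4 := add_le_add huk hyk
          _ = ε / 2 := by ring
    calc supNorm (x - y) ≤ ε / 2 := supNorm_le hptw
      _ < ε := by linarith
end Part4

/-! ### Part 3: countable dense family of eventually-constant targets -/

lemma tri_mono : Monotone tri :=
  monotone_nat_of_le_succ (fun n => by rw [tri_succ]; omega)

def tauFun : ℕ → (List ℕ × ℕ) × ℕ := Denumerable.ofNat _

lemma tauFun_surj : ∀ i, ∃ s, tauFun s = i := fun i =>
  ⟨Encodable.encode i, Denumerable.ofNat_encode i⟩

noncomputable def epsFun (s : ℕ) : ℝ := 1 / ((tauFun s).2 + 1)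

lemma epsFun_pos (s : ℕ) : 0 < epsFun s := by
  unfold epsFun; positivity

lemma epsFun_le_one (s : ℕ) : epsFun s ≤ 1 := by
  unfold epsFun
  rw [div_le_one (by positivity)]
  have : (0:ℝ) ≤ ((tauFun s).2 : ℝ) := Nat.cast_nonneg _
  linarith

noncomputable def delFun : ℕ → ℝ
  | 0 => epsFun 0 / 2
  | s + 1 => min (delFun s) (epsFun (s + 1) / 2)

lemma delFun_pos (s : ℕ) : 0 < delFun s := by
  induction s with
  | zero => have := epsFun_pos 0; unfold delFun; linarith
  | succ s ih =>
    have := epsFun_pos (s + 1)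
    unfold delFun
    exact lt_min ih (by linarith)

lemma delFun_le_half_eps (s : ℕ) : delFun s ≤ epsFun s / 2 := by
  cases s with
  | zero => exact le_refl _
  | succ s => exact min_le_right _ _

lemma delFun_anti : ∀ ⦃a b : ℕ⦄, a ≤ b → delFun b ≤ delFun a := by
  have h : ∀ s, delFun (s + 1) ≤ delFun s := fun s => min_le_left _ _
  intro a b hab
  induction b with
  | zero => rw [Nat.le_zero.mp hab]
  | succ b ih =>
    rcases Nat.lt_or_ge a (b + 1) with h1 | h1
    · exact le_trans (h b) (ih (by omega))
    · rw [le_antisymm hab h1]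

lemma delFun_le_one (s : ℕ) : delFun s ≤ 1 := by
  have h1 := delFun_anti (Nat.zero_le s)
  have h2 := delFun_le_half_eps 0
  have h3 := epsFun_le_one 0
  linarith

noncomputable def tgtFun (𝕜 : Type*) [RCLike 𝕜] (P : List ℕ × ℕ) : ℕ → 𝕜 :=
  fun k => TopologicalSpace.denseSeq 𝕜 (P.1.getD k P.2)

lemma tgtFun_const {𝕜 : Type*} [RCLike 𝕜] (P : List ℕ × ℕ) (k : ℕ) (hk : P.1.length ≤ k) :
    tgtFun 𝕜 P k = TopologicalSpace.denseSeq 𝕜 P.2 := by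
  unfold tgtFun
  rw [List.getD_eq_default _ _ hk]

lemma tgt_dense {𝕜 : Type*} [RCLike 𝕜] (y : ℕ → 𝕜) (hy : y ∈ cSet 𝕜) (ε : ℝ) (hε : 0 < ε) :
    ∃ P : List ℕ × ℕ, ∀ k, ‖tgtFun 𝕜 P k - y k‖ ≤ 2 * ε / 3 := by
  obtain ⟨Ly, hLy⟩ := hy
  have hd : DenseRange (TopologicalSpace.denseSeq 𝕜) := TopologicalSpace.denseRange_denseSeq 𝕜
  obtain ⟨K, hK⟩ := Metric.tendsto_atTop.mp hLy (ε / 3) (by positivity)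
  obtain ⟨c, hc⟩ := hd.exists_dist_lt Ly (show (0:ℝ) < ε / 3 by positivity)
  have hgex : ∀ i : ℕ, ∃ m : ℕ, dist (y i) (TopologicalSpace.denseSeq 𝕜 m) < ε / 3 :=
    fun i => hd.exists_dist_lt (y i) (by positivity)
  choose g hg using hgex
  refine ⟨((List.range K).map g, c), fun k => ?_⟩
  rcases Nat.lt_or_ge k K with hk | hk
  · have hlen : k < ((List.range K).map g).length := by
      rw [List.length_map, List.length_range]; exact hk
    have hval : tgtFun 𝕜 ((List.range K).map g, c) k = TopologicalSpace.denseSeq 𝕜 (g k) := by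
      unfold tgtFun
      rw [List.getD_eq_getElem _ _ hlen]
      congr 1
      simp
    rw [hval]
    have := hg k
    rw [dist_comm, dist_eq_norm] at this
    linarith
  · have hval : tgtFun 𝕜 ((List.range K).map g, c) k = TopologicalSpace.denseSeq 𝕜 c := by
      apply tgtFun_const
      simpa using hk
    rw [hval]
    have h1 : ‖TopologicalSpace.denseSeq 𝕜 c - Ly‖ < ε / 3 := by
      rw [← dist_eq_norm, dist_comm]; exact hc
    have h2 : ‖Ly - y k‖ < ε / 3 := by
      have := hK k hk
      rw [dist_comm, dist_eq_norm] at this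
      exact this
    calc ‖TopologicalSpace.denseSeq 𝕜 c - y k‖
        = ‖(TopologicalSpace.denseSeq 𝕜 c - Ly) + (Ly - y k)‖ := by ring_nf
      _ ≤ ‖TopologicalSpace.denseSeq 𝕜 c - Ly‖ + ‖Ly - y k‖ := norm_add_le _ _
      _ ≤ 2 * ε / 3 := by linarith

section Part3
variable {𝕜 : Type*} [RCLike 𝕜] {w : 𝕜} {l : (ℕ → 𝕜) → 𝕜}
variable (hw : 1 < ‖w‖) (hl : ∀ x ∈ cSet 𝕜, Filter.Tendsto x Filter.atTop (nhds (l x)))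

include hw hl in
lemma part3 : ∃ x : ℕ → 𝕜, (∀ n : ℕ, 1 ≤ n → x ∈ hatDomPow w l n) ∧
    ∀ y ∈ cSet 𝕜, ∀ ε > (0 : ℝ), ∃ n : ℕ, supNorm ((hatAct w l)^[n] x - y) < ε := by
  classical
  have hw0 : (0:ℝ) < ‖w‖ := lt_trans one_pos hw
  have hw1 : (1:ℝ) ≤ ‖w‖ := le_of_lt hw
  have hwne : w ≠ 0 := by intro h; rw [h, norm_zero] at hw; linarith
  -- stage data
  set ys : ℕ → ℕ → 𝕜 := fun s => tgtFun 𝕜 (tauFun s).1 with hys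
  set Ks : ℕ → ℕ := fun s => (tauFun s).1.1.length with hKs
  set Ms : ℕ → 𝕜 := fun s => TopologicalSpace.denseSeq 𝕜 (tauFun s).1.2 with hMs
  have hysM : ∀ s k, Ks s ≤ k → ys s k = Ms s := by
    intro s k hk
    simp only [hys, hMs]
    exact tgtFun_const _ k hk
  set Rs : ℕ → ℝ := fun s => 1 + ‖Ms s‖ + ∑ i ∈ Finset.range (Ks s), ‖ys s i - Ms s‖ with hRs
  have hRsM : ∀ s, ‖Ms s‖ ≤ Rs s := by
    intro s
    have : (0:ℝ) ≤ ∑ i ∈ Finset.range (Ks s), ‖ys s i - Ms s‖ :=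
      Finset.sum_nonneg fun i _ => norm_nonneg _
    simp only [hRs]; linarith
  have hRs1 : ∀ s, (1:ℝ) ≤ Rs s := by
    intro s
    have h1 : (0:ℝ) ≤ ∑ i ∈ Finset.range (Ks s), ‖ys s i - Ms s‖ :=
      Finset.sum_nonneg fun i _ => norm_nonneg _
    have h2 := norm_nonneg (Ms s)
    simp only [hRs]; linarith
  have hRsy : ∀ s k, ‖ys s k - Ms s‖ ≤ Rs s := by
    intro s k
    rcases Nat.lt_or_ge k (Ks s) with hk | hk
    · have : ‖ys s k - Ms s‖ ≤ ∑ i ∈ Finset.range (Ks s), ‖ys s i - Ms s‖ :=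
        Finset.single_le_sum (f := fun i => ‖ys s i - Ms s‖) (fun i _ => norm_nonneg _)
          (Finset.mem_range.mpr hk)
      have h2 := norm_nonneg (Ms s)
      simp only [hRs]; linarith
    · rw [hysM s k hk, sub_self, norm_zero]
      linarith [hRs1 s]
  -- the recursive choice of block positions
  have exNext : ∀ s ns : ℕ, ∃ N : ℕ, ns + Ks s + 2 ≤ N ∧
      Rs (s + 1) * ‖w‖ ^ (ns * (N + Ks (s + 1))) ≤ delFun s * ‖w‖ ^ (tri (N - 1)) := by
    intro s ns
    have hds := delFun_pos s
    obtain ⟨J, hJ⟩ := pow_unbounded_of_one_lt (Rs (s + 1) / delFun s) hw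
    have htri : ∀ q, tri q + q ≤ tri (q + 1) := fun q => by rw [tri_succ]; omega
    obtain ⟨q₀, hq₀⟩ := ge_linear tri htri ns (ns * Ks (s + 1) + ns + J)
    refine ⟨max (q₀ + 1) (ns + Ks s + 2), le_max_right _ _, ?_⟩
    set N := max (q₀ + 1) (ns + Ks s + 2) with hN
    have hq : q₀ ≤ N - 1 := by omega
    have h1 : ns * (N - 1) + (ns * Ks (s + 1) + ns + J) ≤ tri (N - 1) := hq₀ _ hq
    have h2 : ns * (N + Ks (s + 1)) + J ≤ tri (N - 1) := by
      obtain ⟨N1, hN1e⟩ : ∃ N1, N = N1 + 1 := ⟨N - 1, by omega⟩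
      have hr : N - 1 = N1 := by omega
      rw [hr] at h1 ⊢
      rw [hN1e]
      have e : ns * (N1 + 1 + Ks (s + 1)) = ns * N1 + ns * Ks (s + 1) + ns := by ring
      omega
    have h3 : ‖w‖ ^ (ns * (N + Ks (s + 1))) * ‖w‖ ^ J ≤ ‖w‖ ^ tri (N - 1) := by
      rw [← pow_add]
      exact pow_le_pow_right₀ hw1 h2
    have h4 : Rs (s + 1) ≤ delFun s * ‖w‖ ^ J := by
      rw [div_lt_iff₀ hds] at hJ
      nlinarith
    calc Rs (s + 1) * ‖w‖ ^ (ns * (N + Ks (s + 1)))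
        ≤ (delFun s * ‖w‖ ^ J) * ‖w‖ ^ (ns * (N + Ks (s + 1))) :=
          mul_le_mul_of_nonneg_right h4 (by positivity)
      _ = delFun s * (‖w‖ ^ (ns * (N + Ks (s + 1))) * ‖w‖ ^ J) := by ring
      _ ≤ delFun s * ‖w‖ ^ tri (N - 1) :=
          mul_le_mul_of_nonneg_left h3 (le_of_lt hds)
  let n : ℕ → ℕ := fun s => Nat.rec 2 (fun s ih => (exNext s ih).choose) s
  have hn0 : n 0 = 2 := rfl
  have hnstep : ∀ s, n (s + 1) = (exNext s (n s)).choose := fun s => rfl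
  have hspec : ∀ s, n s + Ks s + 2 ≤ n (s + 1) ∧
      Rs (s + 1) * ‖w‖ ^ (n s * (n (s + 1) + Ks (s + 1))) ≤
        delFun s * ‖w‖ ^ (tri (n (s + 1) - 1)) := by
    intro s
    rw [hnstep s]
    exact (exNext s (n s)).choose_spec
  clear hnstep
  clear_value n
  have hn2 : ∀ s, 2 ≤ n s := by
    intro s
    induction s with
    | zero => omega
    | succ s ih => have := (hspec s).1; omega
  have hnmono : ∀ ⦃a b : ℕ⦄, a ≤ b → n a ≤ n b := by
    have h : ∀ s, n s ≤ n (s + 1) := fun s => by have := (hspec s).1; omega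
    intro a b hab
    induction b with
    | zero => rw [Nat.le_zero.mp hab]
    | succ b ih =>
      rcases Nat.lt_or_ge a (b + 1) with h1 | h1
      · exact le_trans (ih (by omega)) (h b)
      · rw [le_antisymm hab h1]
    
  have hnlin : ∀ s, s + 2 ≤ n s := by
    intro s
    induction s with
    | zero => omega
    | succ s ih => have := (hspec s).1; omega
  -- ends of blocks are increasing
  have hend : ∀ ⦃a b : ℕ⦄, a < b → n a + Ks a + 1 ≤ n b := by
    intro a b hab
    have h1 := (hspec a).1
    have h2 := hnmono (show a + 1 ≤ b by omega)
    omega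
  -- the block structure
  set IB : ℕ → ℕ → Prop := fun s p => n s - 1 ≤ p ∧ p < n s + Ks s with hIB
  have block_unique : ∀ {s s' p}, IB s p → IB s' p → s = s' := by
    intro s s' p h1 h2
    by_contra hne
    rcases Nat.lt_or_ge s s' with h | h
    · have := hend h
      have h3 := h1.2
      have h4 := h2.1
      omega
    · have hlt : s' < s := by omega
      have := hend hlt
      have h3 := h2.2
      have h4 := h1.1
      omega
  set u : ℕ → 𝕜 := fun p =>
    if h : ∃ s, IB s p then
      (if p + 1 = n h.choose then (w ^ tri p)⁻¹ * Ms h.choose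
       else (w ^ (n h.choose * (p - n h.choose) + tri (n h.choose)))⁻¹ *
         (ys h.choose (p - n h.choose) - Ms h.choose))
    else 0 with hu
  have u_eval : ∀ s p, IB s p → u p =
      (if p + 1 = n s then (w ^ tri p)⁻¹ * Ms s
       else (w ^ (n s * (p - n s) + tri (n s)))⁻¹ * (ys s (p - n s) - Ms s)) := by
    intro s p hb
    have hex : ∃ s', IB s' p := ⟨s, hb⟩
    simp only [hu]
    rw [dif_pos hex]
    have hcs : hex.choose = s := block_unique hex.choose_spec hb
    simp only [hcs]
  have u_gap : ∀ p, (∀ s, ¬ IB s p) → u p = 0 := by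
    intro p hp
    simp only [hu]
    rw [dif_neg (fun hex : ∃ s, IB s p => hp hex.choose hex.choose_spec)]
  have u_first : ∀ s, u (n s - 1) = (w ^ tri (n s - 1))⁻¹ * Ms s := by
    intro s
    have h2 := hn2 s
    have hb : IB s (n s - 1) := ⟨le_refl _, by omega⟩
    rw [u_eval s _ hb, if_pos (by omega : n s - 1 + 1 = n s)]
  have u_block : ∀ s k, k < Ks s →
      u (n s + k) = (w ^ (n s * k + tri (n s)))⁻¹ * (ys s k - Ms s) := by
    intro s k hk
    have h2 := hn2 s
    have hb : IB s (n s + k) := ⟨by omega, by omega⟩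
    rw [u_eval s _ hb, if_neg (by omega : ¬ n s + k + 1 = n s),
      (by omega : n s + k - n s = k)]
  clear hu
  clear_value u
  -- the not-in-any-block region between blocks
  have not_inblock : ∀ s p, n s + Ks s ≤ p → p < n (s + 1) - 1 → ∀ s', ¬ IB s' p := by
    intro s p hp1 hp2 s' hb
    rcases Nat.lt_or_ge s s' with h | h
    · have h1 := hnmono (show s + 1 ≤ s' by omega)
      have := hb.1
      omega
    · rcases Nat.eq_or_lt_of_le h with rfl | h'
      · have := hb.2; omega
      · have := hend h'
        have := hb.2
        omega
  -- norm of u within a block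
  have ublocknorm : ∀ s p, IB s p → ‖u p‖ * ‖w‖ ^ tri (n s - 1) ≤ Rs s := by
    intro s p hb
    have h2 := hn2 s
    rw [u_eval s p hb]
    by_cases hc : p + 1 = n s
    · rw [if_pos hc]
      have hp : p = n s - 1 := by omega
      rw [norm_mul, norm_inv, norm_pow, hp]
      have hpos : (0:ℝ) < ‖w‖ ^ tri (n s - 1) := by positivity
      rw [mul_comm ((‖w‖ ^ tri (n s - 1))⁻¹) _, mul_assoc, inv_mul_cancel₀ (ne_of_gt hpos),
        mul_one]
      exact hRsM s
    · rw [if_neg hc]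
      rw [norm_mul, norm_inv, norm_pow]
      have hle : tri (n s - 1) ≤ n s * (p - n s) + tri (n s) := by
        have := tri_mono (show n s - 1 ≤ n s by omega)
        omega
      have hpos1 : (0:ℝ) < ‖w‖ ^ (n s * (p - n s) + tri (n s)) := by positivity
      have h3 : ‖w‖ ^ tri (n s - 1) ≤ ‖w‖ ^ (n s * (p - n s) + tri (n s)) :=
        pow_le_pow_right₀ hw1 hle
      calc (‖w‖ ^ (n s * (p - n s) + tri (n s)))⁻¹ * ‖ys s (p - n s) - Ms s‖ *
            ‖w‖ ^ tri (n s - 1)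
          ≤ (‖w‖ ^ (n s * (p - n s) + tri (n s)))⁻¹ * ‖ys s (p - n s) - Ms s‖ *
            ‖w‖ ^ (n s * (p - n s) + tri (n s)) := by
            apply mul_le_mul_of_nonneg_left h3
            positivity
        _ = ‖ys s (p - n s) - Ms s‖ := by
            field_simp
        _ ≤ Rs s := hRsy s _
  -- the master decay bound
  have u_decay : ∀ s p, n (s + 1) - 1 ≤ p → ‖u p‖ * ‖w‖ ^ (n s * p) ≤ delFun s := by
    intro s p hp
    by_cases hex : ∃ s', IB s' p
    · obtain ⟨s', hb⟩ := hex
      -- s' ≥ s + 1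
      have hs' : s + 1 ≤ s' := by
        by_contra hcon
        push_neg at hcon
        have h1 : s' ≤ s := by omega
        have h3 := hb.2
        rcases Nat.eq_or_lt_of_le h1 with rfl | h'
        · have := (hspec s').1; omega
        · have := hend h'
          have h4 := (hspec s).1
          omega
      obtain ⟨j, rfl⟩ : ∃ j, s' = j + 1 := ⟨s' - 1, by omega⟩
      have hsj : s ≤ j := by omega
      have hIN := (hspec j).2
      have hT : (0:ℝ) < ‖w‖ ^ tri (n (j + 1) - 1) := by positivity
      have e1 : ‖u p‖ ≤ Rs (j + 1) / ‖w‖ ^ tri (n (j + 1) - 1) :=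
        (le_div_iff₀ hT).mpr (ublocknorm (j + 1) p hb)
      have e3 : ‖w‖ ^ (n s * p) ≤ ‖w‖ ^ (n j * (n (j + 1) + Ks (j + 1))) := by
        apply pow_le_pow_right₀ hw1
        have hm1 : n s ≤ n j := hnmono hsj
        have hm2 : p ≤ n (j + 1) + Ks (j + 1) := by have := hb.2; omega
        exact Nat.mul_le_mul hm1 hm2
      have e2 : Rs (j + 1) / ‖w‖ ^ tri (n (j + 1) - 1) *
          ‖w‖ ^ (n j * (n (j + 1) + Ks (j + 1))) ≤ delFun j := by
        rw [div_mul_eq_mul_div, div_le_iff₀ hT]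
        calc Rs (j + 1) * ‖w‖ ^ (n j * (n (j + 1) + Ks (j + 1)))
            ≤ delFun j * ‖w‖ ^ tri (n (j + 1) - 1) := hIN
          _ = delFun j * ‖w‖ ^ tri (n (j + 1) - 1) := rfl
      calc ‖u p‖ * ‖w‖ ^ (n s * p)
          ≤ Rs (j + 1) / ‖w‖ ^ tri (n (j + 1) - 1) *
            ‖w‖ ^ (n j * (n (j + 1) + Ks (j + 1))) := by
            exact mul_le_mul e1 e3 (pow_nonneg (le_of_lt hw0) _)
              (div_nonneg (le_trans zero_le_one (hRs1 _)) (le_of_lt hT))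
        _ ≤ delFun j := e2
        _ ≤ delFun s := delFun_anti hsj
    · rw [u_gap p (fun s' h => hex ⟨s', h⟩)]
      rw [norm_zero, zero_mul]
      exact le_of_lt (delFun_pos s)
  -- decay of u
  have hD : Decays w u := by
    intro a b
    rw [Filter.eventually_atTop]
    refine ⟨max (n (a + 1) - 1) b, fun p hp => ?_⟩
    have hp1 : n (a + 1) - 1 ≤ p := le_trans (le_max_left _ _) hp
    have hp2 : b ≤ p := le_trans (le_max_right _ _) hp
    have hna : a + 1 ≤ n a := by have := hnlin a; omega
    have hexp : a * p + b ≤ n a * p := by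
      have h1 : a * p + b ≤ (a + 1) * p := by nlinarith
      have h2 : (a + 1) * p ≤ n a * p := Nat.mul_le_mul_right _ hna
      omega
    have h3 : ‖w‖ ^ (a * p + b) ≤ ‖w‖ ^ (n a * p) := pow_le_pow_right₀ hw1 hexp
    calc ‖u p‖ * ‖w‖ ^ (a * p + b) ≤ ‖u p‖ * ‖w‖ ^ (n a * p) :=
          mul_le_mul_of_nonneg_left h3 (norm_nonneg _)
      _ ≤ delFun a := u_decay a p hp1
      _ ≤ 1 := delFun_le_one a
  -- the universal vector
  have hu0 : Filter.Tendsto u Filter.atTop (nhds 0) := by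
    have := hs_of_decays hw hD 0 0
    simp only [Nat.zero_mul, Nat.add_zero, pow_zero, one_mul, zero_mul, zero_add] at this
    exact this
  have hHS : ∀ m, 1 ≤ m →
      Filter.Tendsto (fun k => w ^ (m * k + tri m) * (u (k + m) - 0)) Filter.atTop (nhds 0) := by
    intro m _
    refine (hs_of_decays hw hD m (tri m)).congr fun k => ?_
    rw [sub_zero]
  obtain ⟨form, dom⟩ := iter_master hl hu0 hHS
  -- the per-stage estimate
  have stage : ∀ s k, ‖((hatAct w l)^[n s] u - ys s) k‖ ≤ delFun s := by
    intro s k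
    have h2 := hn2 s
    set j := n s - 1 with hj
    have hnj : n s = j + 1 := by omega
    have hform := form j
    rw [← hnj] at hform
    have hterm2 : w ^ tri j * u j = Ms s := by
      have : u j = (w ^ tri j)⁻¹ * Ms s := by
        rw [hj]
        exact u_first s
      rw [this, ← mul_assoc, mul_inv_cancel₀ (pow_ne_zero _ hwne), one_mul]
    have hpt := congrFun hform k
    simp only [sub_zero] at hpt
    rw [Pi.sub_apply, hpt, hterm2]
    rcases Nat.lt_or_ge k (Ks s) with hk | hk
    · -- exact agreement on the initial segment
      have hidx : k + n s = n s + k := Nat.add_comm k (n s)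
      rw [hidx, u_block s k hk, ← mul_assoc, mul_inv_cancel₀ (pow_ne_zero _ hwne), one_mul]
      have hz : ys s k - Ms s + Ms s - ys s k = (0:𝕜) := by ring
      rw [hz, norm_zero]
      exact le_of_lt (delFun_pos s)
    · -- the tail
      rw [hysM s k hk]
      have hz : w ^ (n s * k + tri (n s)) * u (k + n s) + Ms s - Ms s
          = w ^ (n s * k + tri (n s)) * u (k + n s) := by ring
      rw [hz]
      by_cases hp2 : k + n s < n (s + 1) - 1
      · rw [u_gap (k + n s) (not_inblock s (k + n s) (by omega) hp2), mul_zero, norm_zero]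
        exact le_of_lt (delFun_pos s)
      · have hp3 : n (s + 1) - 1 ≤ k + n s := by omega
        have hud := u_decay s (k + n s) hp3
        have hexp : n s * k + tri (n s) ≤ n s * (k + n s) := by
          have h1 : n s * (k + n s) = n s * k + n s * n s := Nat.mul_add _ _ _
          have h2 := tri_le_sq (n s)
          omega
        rw [norm_mul, norm_pow]
        calc ‖w‖ ^ (n s * k + tri (n s)) * ‖u (k + n s)‖
            ≤ ‖w‖ ^ (n s * (k + n s)) * ‖u (k + n s)‖ :=
              mul_le_mul_of_nonneg_right (pow_le_pow_right₀ hw1 hexp) (norm_nonneg _)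
          _ = ‖u (k + n s)‖ * ‖w‖ ^ (n s * (k + n s)) := mul_comm _ _
          _ ≤ delFun s := hud
  -- final assembly
  refine ⟨u, fun N _ m _ => dom m, ?_⟩
  intro y hy ε hε
  obtain ⟨P, hP⟩ := tgt_dense y hy (ε / 2) (by positivity)
  obtain ⟨p, hp⟩ := exists_nat_one_div_lt (show (0:ℝ) < ε / 2 by positivity)
  obtain ⟨s, hs⟩ := tauFun_surj (P, p)
  refine ⟨n s, ?_⟩
  have hyss : ys s = tgtFun 𝕜 P := by simp only [hys, hs]
  have heps : epsFun s = 1 / ((p : ℝ) + 1) := by unfold epsFun; rw [hs]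
  have hd4 : delFun s < ε / 4 := by
    have h1 := delFun_le_half_eps s
    rw [heps] at h1
    linarith
  have hptw : ∀ k, ‖((hatAct w l)^[n s] u - y) k‖ ≤ delFun s + ε / 3 := by
    intro k
    have h1 : ((hatAct w l)^[n s] u - y) k
        = ((hatAct w l)^[n s] u - ys s) k + (ys s k - y k) := by
      simp only [Pi.sub_apply]; ring
    rw [h1]
    have h2 := stage s k
    have h3 : ‖ys s k - y k‖ ≤ ε / 3 := by
      rw [hyss]
      have := hP k
      linarith
    calc ‖((hatAct w l)^[n s] u - ys s) k + (ys s k - y k)‖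
        ≤ ‖((hatAct w l)^[n s] u - ys s) k‖ + ‖ys s k - y k‖ := norm_add_le _ _
      _ ≤ delFun s + ε / 3 := add_le_add h2 h3
  calc supNorm ((hatAct w l)^[n s] u - y) ≤ delFun s + ε / 3 := supNorm_le hptw
    _ < ε := by linarith
end Part3


/-- For every `w` with `‖w‖ > 1`, the linear operator `Â_w` in `c` defined by
`(Â_w x)_k = w^k (x_{k+1} - l(x)) + x_1 - l(x)` on
`D(Â_w) = {x ∈ c : (w^k (x_{k+1} - l(x)))_k ∈ c₀}` is unbounded, closed, and chaotic (it has
a hypercyclic vector in `⋂_{n ≥ 1} D(Â_wⁿ)` and a dense set of periodic points, density taken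
w.r.t. the sup-norm); moreover, every `λ` is an eigenvalue of `Â_w` of geometric
multiplicity `1`, i.e. the eigenspace `ker (Â_w - λI)` is spanned by a single nonzero
vector. -/
theorem unbounded_operator_in_c_chaotic
    (𝕜 : Type*) [RCLike 𝕜] (w : 𝕜) (hw : 1 < ‖w‖)
    (l : (ℕ → 𝕜) → 𝕜)
    (hl : ∀ x ∈ cSet 𝕜, Tendsto x atTop (nhds (l x))) :
    -- `Â_w` is unbounded
    (¬ ∃ C : ℝ, ∀ x ∈ hatDom w l, supNorm (hatAct w l x) ≤ C * supNorm x) ∧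
    -- `Â_w` is closed
    (∀ (X : ℕ → ℕ → 𝕜) (x y : ℕ → 𝕜),
      (∀ m, X m ∈ hatDom w l) → x ∈ cSet 𝕜 → y ∈ cSet 𝕜 →
      Tendsto (fun m => supNorm (X m - x)) atTop (nhds 0) →
      Tendsto (fun m => supNorm (hatAct w l (X m) - y)) atTop (nhds 0) →
      x ∈ hatDom w l ∧ hatAct w l x = y) ∧
    -- `Â_w` has a hypercyclic vector in `C^∞(Â_w)`
    (∃ x : ℕ → 𝕜, (∀ n : ℕ, 1 ≤ n → x ∈ hatDomPow w l n) ∧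
      ∀ y ∈ cSet 𝕜, ∀ ε > (0 : ℝ), ∃ n : ℕ, supNorm ((hatAct w l)^[n] x - y) < ε) ∧
    -- the periodic points of `Â_w` are dense in `c`
    (∀ y ∈ cSet 𝕜, ∀ ε > (0 : ℝ),
      ∃ x : ℕ → 𝕜,
        (∃ N : ℕ, 1 ≤ N ∧ x ∈ hatDomPow w l N ∧ (hatAct w l)^[N] x = x) ∧
        supNorm (x - y) < ε) ∧
    -- every `λ` is an eigenvalue of geometric multiplicity `1`
    (∀ lam : 𝕜, ∃ v : ℕ → 𝕜, v ∈ hatDom w l ∧ v ≠ 0 ∧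
      {x : ℕ → 𝕜 | x ∈ hatDom w l ∧ hatAct w l x = lam • x} =
        Set.range fun c : 𝕜 => c • v) := by
  exact ⟨part1 hw hl, part2 hl, part3 hw hl, part4 hw hl, part5 hw hl⟩
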